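/- Let r > 2 be real. Then the function z ↦ 1 - (1 - 1/(rz))^r (with the principal branch of the power on ℂ∖(-∞,0]) has a zero in the open upper half-plane ℂ₊. -/

import Mathlib

open Complex

/-- for real `r > 2`, the function `z ↦ 1 - (1 - 1/(rz))^r`
(principal branch of the complex power) has a zero in the open upper half-plane. -/
theorem stmt11 (r : ℝ) (hr : 2 < r) :
    ∃ z : ℂ, 0 < z.im ∧ 1 - (1 - 1 / ((r : ℂ) * z)) ^ ((r : ℂ)) = 0 := by
  have hπ := Real.pi_pos
  have hr0 : (0:ℝ) < r := by linarith
  set θ : ℝ := 2 * Real.pi / r with hθdef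
  have hθpos : 0 < θ := by positivity
  have hθlt : θ < Real.pi := by
    rw [hθdef, div_lt_iff₀ hr0]; nlinarith
  set w : ℂ := Complex.exp ((θ : ℂ) * I) with hwdef
  have hwim : w.im = Real.sin θ := by
    simp [hwdef, Complex.exp_ofReal_mul_I_im]
  have hsin : 0 < Real.sin θ := Real.sin_pos_of_pos_of_lt_pi hθpos hθlt
  have hw1 : (1:ℂ) - w ≠ 0 := by
    intro h
    have hw' : w = 1 := by linear_combination -h
    rw [hw'] at hwim
    simp at hwim
    linarith
  have hrC : (r : ℂ) ≠ 0 := by exact_mod_cast hr0.ne'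
  set c : ℂ := (r : ℂ) * (1 - w) with hcdef
  have hc : c ≠ 0 := mul_ne_zero hrC hw1
  refine ⟨c⁻¹, ?_, ?_⟩
  · rw [Complex.inv_im]
    have hcim : c.im = -(r * Real.sin θ) := by
      simp [hcdef, hwim]
    rw [hcim, neg_neg]
    have hnsq : 0 < Complex.normSq c := Complex.normSq_pos.mpr hc
    positivity
  · have h1 : 1 - 1 / ((r : ℂ) * c⁻¹) = w := by
      rw [hcdef]
      field_simp
      ring
    rw [h1]
    have hwne : w ≠ 0 := Complex.exp_ne_zero _
    rw [Complex.cpow_def_of_ne_zero hwne]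
    have hlog : Complex.log w = (θ : ℂ) * I := by
      rw [hwdef, Complex.log_exp]
      · simp [hθpos.le, hθlt.le]; linarith
      · simp [hθlt.le]
    rw [hlog]
    have harg : ((θ : ℂ) * I) * (r : ℂ) = 2 * Real.pi * I := by
      have : (θ : ℝ) * r = 2 * Real.pi := by
        rw [hθdef]; field_simp
      push_cast
      rw [mul_right_comm]
      rw_mod_cast [this]
    rw [harg, Complex.exp_two_pi_mul_I]
    ring
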